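/- Let $c \in \mathbb{R}^d$ with $c_j > 0$ for all $j$ and $\|c\|_{\ell^1} = \sum c_j \leq 1$, let $\varepsilon > 0$, and let $P_1, \ldots, P_d$ be rank-one orthogonal projections in $M_2(\mathbb{C})$ with $\|P_j - P_k\| \leq \varepsilon$ for all $j,k$. Suppose $Z_1, \ldots, Z_d$ are positive bounded operators with $Z_i Z_j = 0$ for $i \neq j$, $\|Z_j\| \leq 1$, and there is an isometry $V: \mathbb{C}^2 \to H$ with $c_j P_j = V^* Z_j V$ for all $j$. Then for each $j$ and each $\delta \in (0,1)$ with $r \in (0,1)$ satisfying $\sum_{k \neq j} c_k \leq r$: $\max\{\|Z_j\|, 1 - \delta\} \geq \|c\|_{\ell^1}(1 - \varepsilon) - \delta r$. -/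

import Mathlib

set_option maxHeartbeats 1000000


/-- Let `c ∈ ℝ^d` with `c j > 0` and `∑ c j ≤ 1`, let `ε > 0`, and let
`P 1, …, P d` be rank-one orthogonal projections on `ℂ²` with `‖P j - P k‖ ≤ ε`.
Suppose `Z 1, …, Z d` are positive bounded operators with `Z i Z j = 0` for `i ≠ j`,
`‖Z j‖ ≤ 1`, and `c j • P j = V* ∘ Z j ∘ V` for an isometry `V : ℂ² → H`.  Then for
each `j`, each `δ ∈ (0,1)` and each `r ∈ (0,1)` with `∑_{k ≠ j} c k ≤ r`, one has
`max {‖Z j‖, 1 - δ} ≥ ‖c‖₁ (1 - ε) - δ r`. -/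
theorem compression_norm_lower_bound
    {H : Type*} [NormedAddCommGroup H] [InnerProductSpace ℂ H] [CompleteSpace H]
    {d : ℕ} (c : Fin d → ℝ) (hc : ∀ j, 0 < c j) (hc1 : ∑ j, c j ≤ 1)
    (ε : ℝ) (hε : 0 < ε)
    (P : Fin d → EuclideanSpace ℂ (Fin 2) →L[ℂ] EuclideanSpace ℂ (Fin 2))
    (hPsa : ∀ j, IsSelfAdjoint (P j))
    (hPproj : ∀ j, P j * P j = P j)
    (hPrank : ∀ j, Module.finrank ℂ (LinearMap.range (P j : EuclideanSpace ℂ (Fin 2) →ₗ[ℂ] EuclideanSpace ℂ (Fin 2))) = 1)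
    (hPclose : ∀ j k, ‖P j - P k‖ ≤ ε)
    (Z : Fin d → H →L[ℂ] H)
    (hZpos : ∀ j, (0 : H →L[ℂ] H) ≤ Z j)
    (hZann : ∀ i j, i ≠ j → Z i * Z j = 0)
    (hZnorm : ∀ j, ‖Z j‖ ≤ 1)
    (V : EuclideanSpace ℂ (Fin 2) →L[ℂ] H) (hV : Isometry V)
    (hcomp : ∀ j, (c j : ℂ) • P j = ContinuousLinearMap.adjoint V ∘L Z j ∘L V) :
    ∀ (j : Fin d) (δ r : ℝ), 0 < δ → δ < 1 → 0 < r → r < 1 →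
      ∑ k ∈ Finset.univ.erase j, c k ≤ r →
      (∑ k, c k) * (1 - ε) - δ * r ≤ max ‖Z j‖ (1 - δ) := by
  intro j δ r hδ0 hδ1 hr0 hr1 hrsum
  classical
  set M : ℝ := max ‖Z j‖ (1 - δ) with hMdef
  have hM0 : 0 < M := lt_of_lt_of_le (by linarith) (le_max_right _ _)
  set w : Fin d → ℝ := fun k => if k = j then 1 else 1 - δ with hwdef
  have hw0 : ∀ k, 0 ≤ w k := by
    intro k; simp only [hwdef]; split <;> linarith
  have hw1 : ∀ k, w k ≤ 1 := by
    intro k; simp only [hwdef]; split <;> linarith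
  set W : Fin d → ℂ := fun k => ((w k : ℝ) : ℂ) with hWdef
  set a : H →L[ℂ] H := ∑ k, W k • Z k with hadef
  -- self-adjointness
  have hZsa : ∀ k, IsSelfAdjoint (Z k) :=
    fun k => (((Z k).nonneg_iff_isPositive).mp (hZpos k)).isSelfAdjoint
  have hasa : IsSelfAdjoint a := by
    rw [IsSelfAdjoint, hadef, star_sum]
    refine Finset.sum_congr rfl fun k _ => ?_
    rw [star_smul, (hZsa k).star_eq, hWdef]
    simp
  -- norms of weights
  have hWM : ∀ k, ‖W k‖ * ‖Z k‖ ≤ M := by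
    intro k
    have hnW : ‖W k‖ = w k := by
      rw [hWdef]
      simp [Real.norm_eq_abs, abs_of_nonneg (hw0 k)]
    rw [hnW]
    by_cases hk : k = j
    · subst hk
      have : w k = 1 := by simp [hwdef]
      rw [this, one_mul]; exact le_max_left _ _
    · have hwk : w k = 1 - δ := by simp [hwdef, hk]
      calc w k * ‖Z k‖ ≤ w k * 1 :=
            mul_le_mul_of_nonneg_left (hZnorm k) (hw0 k)
        _ = 1 - δ := by rw [hwk, mul_one]
        _ ≤ M := le_max_right _ _
  -- powers of a
  have hpow : ∀ n : ℕ, a ^ (n + 1) = ∑ k, (W k) ^ (n + 1) • (Z k) ^ (n + 1) := by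
    intro n
    induction n with
    | zero => simp [hadef]
    | succ n ih =>
      have key : ∀ k : Fin d, (Z k) ^ (n + 1) * a = W k • (Z k) ^ (n + 2) := by
        intro k
        rw [hadef, Finset.mul_sum]
        rw [Finset.sum_eq_single k]
        · rw [mul_smul_comm, ← pow_succ]
        · intro l _ hl
          rw [mul_smul_comm, pow_succ, mul_assoc, hZann k l (Ne.symm hl)]
          simp
        · simp
      rw [pow_succ, ih, Finset.sum_mul]
      refine Finset.sum_congr rfl fun k _ => ?_
      rw [smul_mul_assoc, key k, smul_smul, ← pow_succ]
  -- norm bound on powers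
  have hpownorm : ∀ n : ℕ, ‖a ^ (n + 1)‖ ≤ d * M ^ (n + 1) := by
    intro n
    rw [hpow n]
    calc ‖∑ k, (W k) ^ (n + 1) • (Z k) ^ (n + 1)‖
        ≤ ∑ k : Fin d, ‖(W k) ^ (n + 1) • (Z k) ^ (n + 1)‖ := norm_sum_le _ _
      _ ≤ ∑ _k : Fin d, M ^ (n + 1) := by
          refine Finset.sum_le_sum fun k _ => ?_
          rw [norm_smul, norm_pow]
          calc ‖W k‖ ^ (n + 1) * ‖(Z k) ^ (n + 1)‖
              ≤ ‖W k‖ ^ (n + 1) * ‖Z k‖ ^ (n + 1) := by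
                refine mul_le_mul_of_nonneg_left (norm_pow_le' _ (Nat.succ_pos n)) ?_
                positivity
            _ = (‖W k‖ * ‖Z k‖) ^ (n + 1) := (mul_pow _ _ _).symm
            _ ≤ M ^ (n + 1) := by
                refine pow_le_pow_left₀ ?_ (hWM k) _
                positivity
      _ = d * M ^ (n + 1) := by
          rw [Finset.sum_const, Finset.card_univ, Fintype.card_fin, nsmul_eq_mul]
  -- ‖a‖ ≤ M via 2^n trick
  have hanorm : ‖a‖ ≤ M := by
    by_contra hcon
    push_neg at hcon
    have ht1 : 1 < ‖a‖ / M := (one_lt_div hM0).mpr hcon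
    obtain ⟨n, hn⟩ := pow_unbounded_of_one_lt (d : ℝ) ht1
    have h2n : (‖a‖ / M) ^ (2 ^ n) ≤ d := by
      have hsq : ‖a‖ ^ (2 ^ n) = ‖a ^ (2 ^ n)‖ := by
        have := hasa.nnnorm_pow_two_pow n
        have := congrArg (fun x : NNReal => (x : ℝ)) this
        simpa using this.symm
      have h1 : 1 ≤ 2 ^ n := Nat.one_le_two_pow
      have hb : ‖a ^ (2 ^ n)‖ ≤ d * M ^ (2 ^ n) := by
        obtain ⟨m, hm⟩ := Nat.exists_eq_add_of_le h1
        rw [hm, add_comm 1 m]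
        exact hpownorm m
      rw [div_pow, div_le_iff₀ (by positivity)]
      rw [hsq]
      exact hb
    have hgt : (d : ℝ) < (‖a‖ / M) ^ (2 ^ n) := by
      calc (d : ℝ) < (‖a‖ / M) ^ n := hn
        _ ≤ (‖a‖ / M) ^ (2 ^ n) :=
            pow_le_pow_right₀ ht1.le (Nat.le_of_lt (Nat.lt_two_pow_self (n := n)))
    linarith
  -- the compression
  set u : Fin d → ℝ := fun k => w k * c k with hudef
  have hu0 : ∀ k, 0 ≤ u k := fun k => mul_nonneg (hw0 k) (hc k).le
  have huc : ∀ k, u k ≤ c k := by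
    intro k
    calc u k = w k * c k := rfl
      _ ≤ 1 * c k := mul_le_mul_of_nonneg_right (hw1 k) (hc k).le
      _ = c k := one_mul _
  have hT : ContinuousLinearMap.adjoint V ∘L a ∘L V = ∑ k, ((u k : ℝ) : ℂ) • P k := by
    refine ContinuousLinearMap.ext fun x => ?_
    simp only [ContinuousLinearMap.coe_comp', Function.comp_apply, hadef,
      ContinuousLinearMap.sum_apply, ContinuousLinearMap.smul_apply, map_sum, map_smul]
    refine Finset.sum_congr rfl fun k _ => ?_
    have hk := congrArg (fun T : EuclideanSpace ℂ (Fin 2) →L[ℂ] EuclideanSpace ℂ (Fin 2) => T x) (hcomp k)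
    simp only [ContinuousLinearMap.smul_apply, ContinuousLinearMap.coe_comp',
      Function.comp_apply] at hk
    rw [← hk, hudef, hWdef]
    simp only [Complex.ofReal_mul, smul_smul]
  -- norm of T is at most ‖a‖ ≤ M
  have hVnorm : ‖V‖ ≤ 1 := by
    refine ContinuousLinearMap.opNorm_le_bound _ zero_le_one fun x => ?_
    rw [hV.norm_map_of_map_zero (map_zero V), one_mul]
  have hTnorm : ‖ContinuousLinearMap.adjoint V ∘L a ∘L V‖ ≤ M := by
    calc ‖ContinuousLinearMap.adjoint V ∘L a ∘L V‖
        ≤ ‖ContinuousLinearMap.adjoint V‖ * ‖a ∘L V‖ := ContinuousLinearMap.opNorm_comp_le _ _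
      _ ≤ ‖ContinuousLinearMap.adjoint V‖ * (‖a‖ * ‖V‖) := by
          refine mul_le_mul_of_nonneg_left (ContinuousLinearMap.opNorm_comp_le _ _) (norm_nonneg _)
      _ ≤ 1 * (M * 1) := by
          have h1 : ‖ContinuousLinearMap.adjoint V‖ ≤ 1 := by
            rw [show ‖ContinuousLinearMap.adjoint V‖ = ‖V‖ from
              LinearIsometryEquiv.norm_map ContinuousLinearMap.adjoint V]
            exact hVnorm
          have h2 : ‖a‖ * ‖V‖ ≤ M * 1 :=
            mul_le_mul hanorm hVnorm (norm_nonneg _) hM0.le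
          exact mul_le_mul h1 h2 (by positivity) zero_le_one
      _ = M := by ring
  -- ‖P j‖ = 1
  have hPjnorm : ‖P j‖ = 1 := by
    have hne : P j ≠ 0 := by
      intro h
      have := hPrank j
      rw [h] at this
      rw [show LinearMap.range ((0 : EuclideanSpace ℂ (Fin 2) →L[ℂ] EuclideanSpace ℂ (Fin 2)) : EuclideanSpace ℂ (Fin 2) →ₗ[ℂ] EuclideanSpace ℂ (Fin 2)) = ⊥ by
        ext x; simp [LinearMap.mem_range, eq_comm]] at this
      rw [finrank_bot] at this
      exact one_ne_zero this.symm
    have hsq : ‖P j‖ * ‖P j‖ = ‖P j‖ := by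
      rw [← CStarRing.norm_star_mul_self, (hPsa j).star_eq, hPproj j]
    have hpos : 0 < ‖P j‖ := norm_pos_iff.mpr hne
    nlinarith
  -- lower bound for the compression norm
  set S : ℝ := ∑ k, u k with hSdef
  have hkey : ((S : ℝ) : ℂ) • P j =
      (∑ k, ((u k : ℝ) : ℂ) • P k) - ∑ k, ((u k : ℝ) : ℂ) • (P k - P j) := by
    have h : ∀ k : Fin d, ((u k : ℝ) : ℂ) • P k - ((u k : ℝ) : ℂ) • (P k - P j)
        = ((u k : ℝ) : ℂ) • P j := by
      intro k; rw [smul_sub]; abel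
    rw [← Finset.sum_sub_distrib, Finset.sum_congr rfl fun k _ => h k, ← Finset.sum_smul]
    norm_cast
  have hS_lb : S ≤ M + ε * ∑ k, c k := by
    have h1 : ‖((S : ℝ) : ℂ) • P j‖ = S := by
      rw [norm_smul ((S : ℝ) : ℂ) (P j), hPjnorm, mul_one]
      simp [Real.norm_eq_abs, abs_of_nonneg (Finset.sum_nonneg fun k _ => hu0 k)]
      exact Finset.sum_nonneg fun k _ => hu0 k
    have h2 : ‖∑ k, ((u k : ℝ) : ℂ) • (P k - P j)‖ ≤ ε * ∑ k, c k := by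
      calc ‖∑ k, ((u k : ℝ) : ℂ) • (P k - P j)‖
          ≤ ∑ k, ‖((u k : ℝ) : ℂ) • (P k - P j)‖ := norm_sum_le _ _
        _ ≤ ∑ k, ε * c k := by
            refine Finset.sum_le_sum fun k _ => ?_
            rw [norm_smul ((u k : ℝ) : ℂ) (P k - P j)]
            have : ‖((u k : ℝ) : ℂ)‖ = u k := by
              simp [Real.norm_eq_abs, abs_of_nonneg (hu0 k)]
            rw [this]
            calc u k * ‖P k - P j‖ ≤ c k * ε :=
                  mul_le_mul (huc k) (hPclose k j) (norm_nonneg _) (hc k).le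
              _ = ε * c k := mul_comm _ _
        _ = ε * ∑ k, c k := by rw [← Finset.mul_sum]
    have h3 : S ≤ ‖(∑ k, ((u k : ℝ) : ℂ) • P k)‖ + ‖∑ k, ((u k : ℝ) : ℂ) • (P k - P j)‖ := by
      rw [← h1, hkey]
      exact norm_sub_le _ _
    have h4 : ‖(∑ k, ((u k : ℝ) : ℂ) • P k)‖ ≤ M := by rw [← hT]; exact hTnorm
    linarith
  -- arithmetic finish
  have hSval : S = ∑ k, c k - δ * ∑ k ∈ Finset.univ.erase j, c k := by
    rw [hSdef]
    rw [← Finset.add_sum_erase _ u (Finset.mem_univ j),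
        ← Finset.add_sum_erase _ c (Finset.mem_univ j)]
    have huj : u j = c j := by simp [hudef, hwdef]
    rw [huj]
    have : ∑ k ∈ Finset.univ.erase j, u k = (1 - δ) * ∑ k ∈ Finset.univ.erase j, c k := by
      rw [Finset.mul_sum]
      refine Finset.sum_congr rfl fun k hk => ?_
      have : k ≠ j := Finset.ne_of_mem_erase hk
      simp [hudef, hwdef, this]
    rw [this]
    ring
  have hSge : ∑ k, c k - δ * r ≤ S := by
    rw [hSval]
    have := mul_le_mul_of_nonneg_left hrsum hδ0.le
    linarith
  calc (∑ k, c k) * (1 - ε) - δ * r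
      = (∑ k, c k - δ * r) - ε * ∑ k, c k := by ring
    _ ≤ S - ε * ∑ k, c k := by linarith
    _ ≤ M := by linarith
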